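/- arXiv:1911.09547 — 2 statements merged into one kernel-verified Lean document; each statement's English description precedes it below -/
import Mathlib

section
/- Let D = (V,A) be a finite digraph all of whose connected components are strongly connected (a totally cyclic digraph), and let e = {(u,v),(v,u)} ⊆ A be a digon (a pair of antiparallel arcs). Then e is redundant for cyclicity (i.e., D with both arcs of e removed is still totally cyclic) whenever both arcs (u,v) and (v,u) lie on directed cycles of length at least 3 in D. -/
/-- Weak reachability: reachability in the underlying undirected graph of the arc set. -/
def weakReach {V : Type*} (A : Set (V × V)) : V → V → Prop :=
  Relation.ReflTransGen (fun u v => (u, v) ∈ A ∨ (v, u) ∈ A)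

/-- Directed reachability along arcs of `A`. -/
def strongReach {V : Type*} (A : Set (V × V)) : V → V → Prop :=
  Relation.ReflTransGen (fun u v => (u, v) ∈ A)

/-- A digraph (given by its arc set `A`) is totally cyclic if every weakly connected
component is strongly connected. -/
def TotallyCyclic {V : Type*} (A : Set (V × V)) : Prop :=
  ∀ u v, weakReach A u v → strongReach A u v

/-- `IsDiCycleFrom A v l` : the vertex sequence `v, l₁, …, lₙ, v` is a directed cycle
of the digraph with arc set `A` (consecutive vertices joined by arcs, distinct vertices). -/
def IsDiCycleFrom {V : Type*} (A : Set (V × V)) (v : V) (l : List V) : Prop :=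
  List.Chain (fun a b => (a, b) ∈ A) v (l ++ [v]) ∧ (v :: l).Nodup

lemma chainReach {V : Type*} (A : Set (V × V)) (u v : V) :
    ∀ (l : List V) (a : V), (∀ x ∈ a :: l, x ≠ u) → (a :: l).getLast? ≠ some v →
      List.Chain (fun x y => (x, y) ∈ A) a (l ++ [u]) →
      strongReach (A \ {(u, v), (v, u)}) a u
  | [], a, hsrc, hlast, hch => by
    simp only [List.nil_append, List.isChain_cons_cons] at hch
    replace hch := List.isChain_cons_cons.mp hch
    refine Relation.ReflTransGen.single ⟨hch.1, ?_⟩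
    have ha : a ≠ u := hsrc a (by simp)
    have ha' : a ≠ v := by simpa using hlast
    simp [Prod.ext_iff, ha, ha']
  | b :: t, a, hsrc, hlast, hch => by
    simp only [List.cons_append, List.isChain_cons_cons] at hch
    replace hch := List.isChain_cons_cons.mp hch
    have hb : b ≠ u := hsrc b (by simp)
    have ha : a ≠ u := hsrc a (by simp)
    refine Relation.ReflTransGen.head ⟨hch.1, ?_⟩
      (chainReach A u v t b (fun x hx => hsrc x (by simp [List.mem_cons] at hx ⊢; tauto))
        (by rwa [List.getLast?_cons_cons] at hlast) hch.2)
    simp [Prod.ext_iff, ha, hb]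

lemma reach_of_cycle {V : Type*} (A : Set (V × V)) (u v : V)
    (h : ∃ l : List V, IsDiCycleFrom A u (v :: l) ∧ l ≠ []) :
    strongReach (A \ {(u, v), (v, u)}) v u := by
  obtain ⟨l, ⟨hch, hnd⟩, hne⟩ := h
  simp only [List.cons_append, List.isChain_cons_cons] at hch
  replace hch := List.isChain_cons_cons.mp hch
  apply chainReach A u v l v
  · intro x hx
    rintro rfl
    simp [List.mem_cons, List.nodup_cons] at hx hnd
    tauto
  · cases l with
    | nil => exact absurd rfl hne
    | cons c t =>
      rw [List.getLast?_cons_cons]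
      intro hcon
      have hm : v ∈ c :: t := by
        obtain ⟨h, hv⟩ := List.mem_getLast?_eq_getLast (l := c :: t) (x := v) hcon
        exact hv ▸ List.getLast_mem h
      simp [List.mem_cons, List.nodup_cons] at hm hnd
      tauto
  · exact hch.2

/-- In a finite totally cyclic digraph, a digon `{(u,v),(v,u)}` is redundant
for cyclicity whenever both of its arcs lie on directed cycles of length at least 3. -/
theorem stmt_4 {V : Type*} [Fintype V] (A : Set (V × V)) (u v : V)
    (htc : TotallyCyclic A)
    (huv : (u, v) ∈ A) (hvu : (v, u) ∈ A) (hne : u ≠ v)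
    (hcyc1 : ∃ l : List V, IsDiCycleFrom A u (v :: l) ∧ l ≠ [])
    (hcyc2 : ∃ l : List V, IsDiCycleFrom A v (u :: l) ∧ l ≠ []) :
    TotallyCyclic (A \ {(u, v), (v, u)}) := by
  set A' := A \ {(u, v), (v, u)} with hA'
  have hvu' : strongReach A' v u := reach_of_cycle A u v hcyc1
  have huv' : strongReach A' u v := by
    have := reach_of_cycle A v u hcyc2
    have hswap : (A \ {(v, u), (u, v)}) = A' := by
      rw [hA']; congr 1; ext p; simp; tauto
    rwa [hswap] at this
  have hlift : ∀ x y, strongReach A x y → strongReach A' x y := by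
    intro x y h
    induction h with
    | refl => exact Relation.ReflTransGen.refl
    | @tail b c hstep harc ih =>
      by_cases h1 : (b, c) = (u, v)
      · rw [Prod.ext_iff] at h1
        obtain ⟨rfl, rfl⟩ := h1
        exact ih.trans huv'
      · by_cases h2 : (b, c) = (v, u)
        · rw [Prod.ext_iff] at h2
          obtain ⟨rfl, rfl⟩ := h2
          exact ih.trans hvu'
        · exact ih.tail ⟨harc, by simp only [Set.mem_insert_iff, Set.mem_singleton_iff]; tauto⟩
  intro x y hw
  apply hlift
  apply htc
  exact Relation.ReflTransGen.mono (fun a b (hab : (a, b) ∈ A' ∨ (b, a) ∈ A') => by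
    rcases hab with h | h
    · exact Or.inl h.1
    · exact Or.inr h.1) _ _ hw
end

section
/- Let D = (V,A) be a finite digraph and k ≥ 1. Vertex colorings c : V → {1,…,k} with no monochromatic directed cycle are in bijection with pairs consisting of (a choice of one color value in each weakly connected component at a fixed representative vertex) and (a ℤ_k-coflow g on D whose support contains a feedback arc set). Consequently, the number of acyclic k-colorings equals k^{c(D)} times the number of such NL-ℤ_k-coflows. -/
/-- A coloring is acyclic (Neumann-Lara) if no directed cycle is monochromatic. -/
def AcyclicColoring {V : Type*} {k : ℕ} (A : Set (V × V)) (c : V → ZMod k) : Prop :=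
  ∀ (v : V) (l : List V), IsDiCycleFrom A v l → ¬ (∀ u ∈ v :: l, c u = c v)

/-- An NL-`ℤ_k`-coflow: a coflow (tension) whose support contains a feedback arc set. -/
def IsNLCoflow {V : Type*} {k : ℕ} (A : Finset (V × V)) (g : A → ZMod k) : Prop :=
  (∃ p : V → ZMod k, ∀ a : A, g a = p (a : V × V).1 - p (a : V × V).2) ∧
    ∃ S ⊆ (A : Set (V × V)), (∀ a : A, (a : V × V) ∈ S → g a ≠ 0) ∧
      ∀ (v : V) (l : List V), ¬ IsDiCycleFrom ((A : Set (V × V)) \ S) v l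

section Aux

variable {V : Type*} {k : ℕ}

private lemma chain_strengthen {α : Type*} {R S : α → α → Prop} {p : α → Prop}
    (h : ∀ a b, R a b → p a → p b → S a b) :
    ∀ (l : List α) (v : α), List.Chain R v l → p v → (∀ u ∈ l, p u) → List.Chain S v l := by
  intro l
  induction l with
  | nil => intro v _ _ _; exact List.Chain.nil
  | cons b t ih =>
    intro v hc hv hl
    rcases List.chain_cons.mp hc with ⟨hvb, ht⟩
    have hb : p b := hl b (by simp)
    exact List.chain_cons.mpr
      ⟨h v b hvb hv hb, ih b ht hb (fun u hu => hl u (by simp [hu]))⟩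

private lemma chain_eq_head (c : V → ZMod k) :
    ∀ (l : List V) (v : V), List.Chain (fun a b => c a = c b) v l → ∀ u ∈ l, c u = c v := by
  intro l
  induction l with
  | nil => simp
  | cons b t ih =>
    intro v hc u hu
    rcases List.chain_cons.mp hc with ⟨hvb, ht⟩
    rcases List.mem_cons.mp hu with rfl | hu
    · exact hvb.symm
    · exact (ih b ht u hu).trans hvb.symm

private lemma acyclic_iff_nl (A : Finset (V × V)) (c : V → ZMod k) :
    AcyclicColoring (A : Set (V × V)) c ↔
      IsNLCoflow A (fun a => c (a : V × V).1 - c (a : V × V).2) := by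
  constructor
  · intro h
    refine ⟨⟨c, fun _ => rfl⟩,
      {x : V × V | x ∈ (A : Set (V × V)) ∧ c x.1 ≠ c x.2}, fun x hx => hx.1, ?_, ?_⟩
    · intro a ha
      exact sub_ne_zero_of_ne ha.2
    · intro v l hcyc
      rcases hcyc with ⟨hchain, hnd⟩
      have hchainA : List.Chain (fun a b => (a, b) ∈ (A : Set (V × V))) v (l ++ [v]) :=
        List.IsChain.imp (fun a b hab => hab.1) hchain
      have hchainEq : List.Chain (fun a b => c a = c b) v (l ++ [v]) := by
        refine List.IsChain.imp (fun a b hab => ?_) hchain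
        by_contra hne
        exact hab.2 ⟨hab.1, hne⟩
      have hmono : ∀ u ∈ v :: l, c u = c v := by
        intro u hu
        rcases List.mem_cons.mp hu with rfl | hu
        · rfl
        · exact chain_eq_head c (l ++ [v]) v hchainEq u (by simp [hu])
      exact h v l ⟨hchainA, hnd⟩ hmono
  · rintro ⟨-, S, hSA, hS, hNo⟩
    rintro v l ⟨hchain, hnd⟩ hmono
    have hp : ∀ u ∈ l ++ [v], c u = c v := by
      intro u hu
      rcases List.mem_append.mp hu with hu | hu
      · exact hmono u (by simp [hu])
      · simp at hu; subst hu; rfl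
    have hchain' : List.Chain (fun a b => (a, b) ∈ (A : Set (V × V)) \ S) v (l ++ [v]) := by
      refine chain_strengthen (p := fun u => c u = c v) ?_ (l ++ [v]) v hchain rfl hp
      intro a b hab ha hb
      refine ⟨hab, fun hmem => ?_⟩
      exact hS ⟨(a, b), hab⟩ hmem (by simp [ha, hb])
    exact hNo v l ⟨hchain', hnd⟩

private lemma diff_const (A : Finset (V × V)) (c c' : V → ZMod k)
    (h : ∀ x ∈ A, c x.1 - c' x.1 = c x.2 - c' x.2) :
    ∀ {u v : V}, weakReach (A : Set (V × V)) u v → c u - c' u = c v - c' v := by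
  intro u v huv
  induction huv with
  | refl => rfl
  | tail _ hstep ih =>
    rcases hstep with hs | hs
    · exact ih.trans (h _ hs)
    · exact ih.trans (h _ hs).symm

private lemma weak_equiv (A : Set (V × V)) : Equivalence (weakReach A) where
  refl _ := Relation.ReflTransGen.refl
  symm := fun h => by
    induction h with
    | refl => exact Relation.ReflTransGen.refl
    | tail _ hs ih => exact Relation.ReflTransGen.head (Or.symm hs) ih
  trans h1 h2 := h1.trans h2

private lemma weak_out (A : Finset (V × V)) (v : V) :
    weakReach (A : Set (V × V)) v (Quot.out (Quot.mk (weakReach (A : Set (V × V))) v)) :=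
  ((weak_equiv (A : Set (V × V))).eqvGen_iff).mp
    (Quot.eqvGen_exact (Quot.out_eq _).symm)

/-- Reconstruct a coloring from component values and a tension. -/
private noncomputable def recon (A : Finset (V × V))
    (f : Quot (weakReach (A : Set (V × V))) → ZMod k) (g : A → ZMod k)
    (hg : ∃ p : V → ZMod k, ∀ a : A, g a = p (a : V × V).1 - p (a : V × V).2) :
    V → ZMod k :=
  fun v => hg.choose v + f (Quot.mk _ v)
    - hg.choose (Quot.out (Quot.mk (weakReach (A : Set (V × V))) v))

private lemma recon_sub (A : Finset (V × V))
    (f : Quot (weakReach (A : Set (V × V))) → ZMod k) (g : A → ZMod k)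
    (hg : ∃ p : V → ZMod k, ∀ a : A, g a = p (a : V × V).1 - p (a : V × V).2) (a : A) :
    recon A f g hg (a : V × V).1 - recon A f g hg (a : V × V).2 = g a := by
  have hq : Quot.mk (weakReach (A : Set (V × V))) (a : V × V).1
      = Quot.mk (weakReach (A : Set (V × V))) (a : V × V).2 :=
    Quot.sound (Relation.ReflTransGen.single (Or.inl a.2))
  have := hg.choose_spec a
  simp only [recon, hq, this]
  ring

private lemma recon_eq_self (A : Finset (V × V)) (c : V → ZMod k)
    (hg : ∃ p : V → ZMod k, ∀ a : A,
      (fun a : A => c (a : V × V).1 - c (a : V × V).2) a = p (a : V × V).1 - p (a : V × V).2)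
    (v : V) :
    recon A (fun q => c q.out) (fun a : A => c (a : V × V).1 - c (a : V × V).2) hg v = c v := by
  set p := hg.choose with hp
  have hspec := hg.choose_spec
  have hconst : p v - c v
      = p (Quot.out (Quot.mk (weakReach (A : Set (V × V))) v))
        - c (Quot.out (Quot.mk (weakReach (A : Set (V × V))) v)) := by
    refine diff_const A p c ?_ (weak_out A v)
    intro x hx
    have := hspec ⟨x, hx⟩
    simp only at this
    linear_combination -this
  simp only [recon]
  linear_combination hconst

private lemma recon_out (A : Finset (V × V))
    (f : Quot (weakReach (A : Set (V × V))) → ZMod k) (g : A → ZMod k)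
    (hg : ∃ p : V → ZMod k, ∀ a : A, g a = p (a : V × V).1 - p (a : V × V).2)
    (q : Quot (weakReach (A : Set (V × V)))) :
    recon A f g hg q.out = f q := by
  simp only [recon, Quot.out_eq]
  ring

end Aux

/-- Acyclic `k`-colorings of a finite digraph are in bijection with pairs
of a choice of one color per weakly connected component and an NL-`ℤ_k`-coflow; hence
their number is `k^{c(D)}` times the number of NL-`ℤ_k`-coflows. -/
theorem stmt_14 {V : Type*} [Fintype V] (A : Finset (V × V)) (k : ℕ) (hk : 1 ≤ k) :
    Nonempty ({c : V → ZMod k // AcyclicColoring (A : Set (V × V)) c} ≃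
        (Quot (weakReach (A : Set (V × V))) → ZMod k) ×
          {g : A → ZMod k // IsNLCoflow A g}) ∧
      Nat.card {c : V → ZMod k // AcyclicColoring (A : Set (V × V)) c} =
        k ^ (Nat.card (Quot (weakReach (A : Set (V × V))))) *
          Nat.card {g : A → ZMod k // IsNLCoflow A g} := by
  have e : {c : V → ZMod k // AcyclicColoring (A : Set (V × V)) c} ≃
      (Quot (weakReach (A : Set (V × V))) → ZMod k) ×
        {g : A → ZMod k // IsNLCoflow A g} := by
    refine
      { toFun := fun c =>
          (fun q => c.1 q.out,
            ⟨fun a => c.1 (a : V × V).1 - c.1 (a : V × V).2, (acyclic_iff_nl A c.1).mp c.2⟩)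
        invFun := fun fg =>
          ⟨recon A fg.1 fg.2.1 fg.2.2.1, ?_⟩
        left_inv := ?_
        right_inv := ?_ }
    · refine (acyclic_iff_nl A _).mpr ?_
      have hfun : (fun a : A => recon A fg.1 fg.2.1 fg.2.2.1 (a : V × V).1
          - recon A fg.1 fg.2.1 fg.2.2.1 (a : V × V).2) = fg.2.1 :=
        funext (recon_sub A fg.1 fg.2.1 fg.2.2.1)
      rw [hfun]
      exact fg.2.2
    · intro c
      ext v
      exact recon_eq_self A c.1 _ v
    · intro fg
      refine Prod.ext (funext fun q => recon_out A fg.1 fg.2.1 fg.2.2.1 q) ?_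
      exact Subtype.ext (funext fun a => recon_sub A fg.1 fg.2.1 fg.2.2.1 a)
  refine ⟨⟨e⟩, ?_⟩
  haveI : NeZero k := ⟨Nat.one_le_iff_ne_zero.mp hk⟩
  haveI : Finite (Quot (weakReach (A : Set (V × V)))) := Quot.finite _
  rw [Nat.card_congr e, Nat.card_prod, Nat.card_fun, Nat.card_zmod]
end
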